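/- Let X be a finite set and T : X → ℝ a UMVUE in the covariance-characterization sense. Then for every function u : ℝ → ℝ and every H : X → ℝ with E_θ H = 0 for all θ, one has E_θ ((u ∘ T) · H) = 0 for all θ. -/

import Mathlib

/-- If `T` is a UMVUE (covariance characterization), then for every `u : ℝ → ℝ`
and every unbiased estimator `H` of zero, `E_θ ((u ∘ T) · H) = 0` for all `θ`. -/
theorem umvue_comp_mem_E0
    {X Θ : Type*} [Fintype X]
    (P : Θ → X → ℝ)
    (hP0 : ∀ θ x, 0 ≤ P θ x)
    (hP1 : ∀ θ, ∑ x, P θ x = 1)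
    (T : X → ℝ)
    (hT : ∀ H : X → ℝ, (∀ θ, ∑ x, H x * P θ x = 0) →
        ∀ θ, ∑ x, T x * H x * P θ x = 0) :
    ∀ (u : ℝ → ℝ) (H : X → ℝ), (∀ θ, ∑ x, H x * P θ x = 0) →
      ∀ θ, ∑ x, u (T x) * H x * P θ x = 0 := by
  intro u H hH θ
  -- powers of T vanish
  have hpow : ∀ j : ℕ, ∀ θ, ∑ x, (T x) ^ j * H x * P θ x = 0 := by
    intro j
    induction j with
    | zero => intro θ; simpa using hH θ
    | succ j ih =>
      intro θ
      have := hT (fun x => (T x) ^ j * H x) ih θ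
      calc ∑ x, (T x) ^ (j+1) * H x * P θ x
          = ∑ x, T x * ((T x) ^ j * H x) * P θ x := by
            apply Finset.sum_congr rfl; intro x _; ring
        _ = 0 := this
  -- interpolate u on the image of T
  classical
  set s : Finset ℝ := Finset.image T Finset.univ with hs
  set p : Polynomial ℝ := Lagrange.interpolate s id u with hp
  have heval : ∀ x : X, p.eval (T x) = u (T x) := by
    intro x
    have hmem : T x ∈ s := Finset.mem_image_of_mem T (Finset.mem_univ x)
    have := Lagrange.eval_interpolate_at_node (r := u) (v := (id : ℝ → ℝ))
      (Set.injOn_id _) hmem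
    simpa [hp] using this
  calc ∑ x, u (T x) * H x * P θ x
      = ∑ x, (∑ j ∈ Finset.range (p.natDegree + 1), p.coeff j * (T x) ^ j) * H x * P θ x := by
        apply Finset.sum_congr rfl; intro x _
        rw [← Polynomial.eval_eq_sum_range, heval x]
    _ = ∑ j ∈ Finset.range (p.natDegree + 1), p.coeff j * ∑ x, (T x) ^ j * H x * P θ x := by
        simp only [Finset.sum_mul, Finset.mul_sum]
        rw [Finset.sum_comm]
        apply Finset.sum_congr rfl; intro j _
        apply Finset.sum_congr rfl; intro x _; ring
    _ = 0 := by
        apply Finset.sum_eq_zero; intro j _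
        rw [hpow j θ, mul_zero]
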